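/- Let C: ℝ^d → ℝ^d be a random map satisfying E[‖C(v) - v‖²] ≤ (1-α)‖v‖² for all v and some α ∈ (0,1]. Let w, x ∈ ℝ^d, γ > 0, g ∈ ℝ^d, and set x⁺ = x - γg and w⁺ = w + C(x⁺ - w). Then with θ = 1 - √(1-α) and β = (1-α)/(1-√(1-α)), we have E[‖w⁺ - x⁺‖²] ≤ (1-θ)‖w - x‖² + γ²β‖g‖². -/

import Mathlib

open MeasureTheory

theorem stmt_6 {d : ℕ} {Ω : Type*} [MeasurableSpace Ω]
    (μ : Measure Ω) [IsProbabilityMeasure μ]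
    (C : Ω → EuclideanSpace ℝ (Fin d) → EuclideanSpace ℝ (Fin d))
    (α : ℝ) (hα0 : 0 < α) (hα1 : α < 1)
    (hC : ∀ v : EuclideanSpace ℝ (Fin d),
      ∫ ξ, ‖C ξ v - v‖^2 ∂μ ≤ (1 - α) * ‖v‖^2)
    (w x g : EuclideanSpace ℝ (Fin d)) (γ : ℝ) (hγ : 0 < γ)
    (θ β : ℝ)
    (hθ : θ = 1 - Real.sqrt (1 - α))
    (hβ : β = (1 - α) / (1 - Real.sqrt (1 - α))) :
    ∫ ξ, ‖(w + C ξ ((x - γ • g) - w)) - (x - γ • g)‖^2 ∂μ ≤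
      (1 - θ) * ‖w - x‖^2 + γ^2 * β * ‖g‖^2 := by
  set v : EuclideanSpace ℝ (Fin d) := (x - γ • g) - w with hv
  have key : ∀ ξ : Ω, (w + C ξ v) - (x - γ • g) = C ξ v - v := by
    intro ξ; rw [hv]; abel
  have h1 : ∫ ξ, ‖(w + C ξ ((x - γ • g) - w)) - (x - γ • g)‖^2 ∂μ
      = ∫ ξ, ‖C ξ v - v‖^2 ∂μ := by
    refine integral_congr_ae (Filter.Eventually.of_forall fun ξ => ?_)
    exact congrArg (fun y => ‖y‖ ^ 2) (key ξ)
  rw [h1]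
  refine le_trans (hC v) ?_
  -- now pure real inequality
  set r := Real.sqrt (1 - α) with hrdef
  have h1α : (0:ℝ) < 1 - α := by linarith
  have hr0 : 0 < r := Real.sqrt_pos.mpr h1α
  have hr2 : r ^ 2 = 1 - α := Real.sq_sqrt (le_of_lt h1α)
  have hr1 : r < 1 := by
    nlinarith [hr2, hr0]
  set A := ‖x - w‖ with hA
  set B := γ * ‖g‖ with hB
  have hA0 : 0 ≤ A := norm_nonneg _
  have hB0 : 0 ≤ B := mul_nonneg hγ.le (norm_nonneg _)
  have hvle : ‖v‖ ≤ A + B := by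
    calc ‖v‖ = ‖(x - w) - γ • g‖ := by rw [hv]; congr 1; abel
    _ ≤ ‖x - w‖ + ‖γ • g‖ := norm_sub_le _ _
    _ = A + B := by rw [norm_smul, Real.norm_eq_abs, abs_of_pos hγ]
  have hv2 : ‖v‖^2 ≤ (A + B)^2 := by
    have := norm_nonneg v
    nlinarith
  have hwx : ‖w - x‖ = A := by rw [hA, norm_sub_rev]
  have hβ' : β * (1 - r) = r ^ 2 := by
    rw [hβ, div_mul_cancel₀ _ (by linarith : (1:ℝ)-r ≠ 0), hr2]
  rw [hθ, hwx]
  -- goal: (1-α) * ‖v‖^2 ≤ (1-(1-r)) * A^2 + γ^2 * β * ‖g‖^2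
  have hgB : γ^2 * β * ‖g‖^2 = β * B^2 := by rw [hB]; ring
  rw [hgB, ← hr2]
  have hkey : r * (1 - r) * (A + B)^2 ≤ (1 - r) * A^2 + r * B^2 := by
    nlinarith [sq_nonneg ((1 - r) * A - r * B)]
  nlinarith [mul_le_mul_of_nonneg_left hv2 (sq_nonneg r), hβ', sq_nonneg r,
    mul_pos hr0 (by linarith : (0:ℝ) < 1 - r)]
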